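/- Let X be a Hilbert space over 𝕜 (𝕜 = ℝ or ℂ) and let A, B : X → X be bounded surjective linear operators. Then the following are equivalent: (i) there exist bounded surjective linear operators T, S : X → X with A = T ∘ B and B = S ∘ A; (ii) there exists a bounded invertible linear operator (continuous linear equivalence) T : X → X with A = T ∘ B. -/

import Mathlib

theorem stmt5 (𝕜 X : Type*) [RCLike 𝕜] [NormedAddCommGroup X]
    [InnerProductSpace 𝕜 X] [CompleteSpace X]
    (A B : X →L[𝕜] X) (hA : Function.Surjective A) (hB : Function.Surjective B) :
    (∃ T S : X →L[𝕜] X, Function.Surjective T ∧ Function.Surjective S ∧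
        A = T.comp B ∧ B = S.comp A) ↔
      ∃ T : X ≃L[𝕜] X, A = (T : X →L[𝕜] X).comp B := by
  constructor
  · rintro ⟨T, S, hT, hS, hAB, hBA⟩
    have hkerBA : ∀ x, B x = 0 → A x = 0 := fun x hx => by
      rw [hAB]; simp [hx]
    have hkerAB : ∀ x, A x = 0 → B x = 0 := fun x hx => by
      rw [hBA]; simp [hx]
    set K : Submodule 𝕜 X := B.ker with hK
    haveI : CompleteSpace K := B.isClosed_ker.completeSpace_coe
    haveI : CompleteSpace (Kᗮ : Submodule 𝕜 X) :=
      K.isClosed_orthogonal.completeSpace_coe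
    let β : (Kᗮ : Submodule 𝕜 X) →L[𝕜] X := B.comp Kᗮ.subtypeL
    have hβinj : β.ker = ⊥ := by
      rw [LinearMap.ker_eq_bot']
      rintro ⟨v, hv⟩ h
      have hvK : v ∈ K := by simpa [β, hK] using h
      have : v = 0 := by
        have := (Submodule.mem_orthogonal K v).mp hv v hvK
        simpa using this
      exact Subtype.ext this
    have hβsurj : β.range = ⊤ := by
      rw [LinearMap.range_eq_top]
      intro y
      obtain ⟨x, hx⟩ := hB y
      obtain ⟨k, hk, z, hz, hxkz⟩ := K.exists_add_mem_mem_orthogonal x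
      refine ⟨⟨z, hz⟩, ?_⟩
      have hBk : B k = 0 := hk
      simp only [β, ContinuousLinearMap.comp_apply, Submodule.subtypeL_apply]
      rw [← hx, hxkz]
      simp [hBk]
    let e : (Kᗮ : Submodule 𝕜 X) ≃L[𝕜] X :=
      ContinuousLinearEquiv.ofBijective β hβinj hβsurj
    have he : ∀ y, B ((e.symm y : (Kᗮ : Submodule 𝕜 X)) : X) = y := fun y => by
      have h1 : e (e.symm y) = y := e.apply_symm_apply y
      exact ContinuousLinearEquiv.ofBijective_apply_symm_apply (B.comp Kᗮ.subtypeL) hβinj hβsurj y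
    let T' : X →L[𝕜] X := (A.comp Kᗮ.subtypeL).comp (e.symm : X →L[𝕜] (Kᗮ : Submodule 𝕜 X))
    have hT'B : ∀ x, T' (B x) = A x := fun x => by
      have h1 : B (x - (e.symm (B x) : X)) = 0 := by
        simp [map_sub, he (B x)]
      have h2 := hkerBA _ h1
      rw [map_sub, sub_eq_zero] at h2
      simpa [T'] using h2.symm
    have hT'inj : T'.ker = ⊥ := by
      rw [LinearMap.ker_eq_bot']
      intro x hx
      have hAv : A ((e.symm x : (Kᗮ : Submodule 𝕜 X)) : X) = 0 := by
        simpa [T'] using hx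
      have hBv : ((e.symm x : (Kᗮ : Submodule 𝕜 X)) : X) ∈ K := hkerAB _ hAv
      have hv0 : (e.symm x : (Kᗮ : Submodule 𝕜 X)) = 0 := by
        have := (Submodule.mem_orthogonal K _).mp (e.symm x).2 _ hBv
        exact Subtype.ext (by simpa using this)
      have := congrArg e hv0
      simpa using this
    have hT'surj : T'.range = ⊤ := by
      rw [LinearMap.range_eq_top]
      intro y
      obtain ⟨x, hx⟩ := hA y
      exact ⟨B x, by rw [ContinuousLinearMap.coe_coe, hT'B x, hx]⟩
    refine ⟨ContinuousLinearEquiv.ofBijective T' hT'inj hT'surj, ?_⟩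
    ext x
    simp [ContinuousLinearEquiv.coeFn_ofBijective, hT'B]
  · rintro ⟨T, hT⟩
    exact ⟨T, T.symm, T.surjective, T.symm.surjective, hT, by
      rw [hT]; ext x; simp⟩
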